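/- Let k have characteristic 2, G a finite group, H ≤ G, and a a unit of kH with a° = a. Then the induced symmetric kG-module Ind_H^G(kH, B_a) is isomorphic (isometrically, as kG-modules) to (kG, B_a). In particular, for each involution t ∈ G, (kG, B_t) ≅ Ind_{⟨t⟩}^G(k⟨t⟩, B_t). -/

import Mathlib

/-- The contragredient map of a group algebra. -/
noncomputable def contra14 (k G : Type*) [Field k] [Group G] :
    MonoidAlgebra k G →ₗ[k] MonoidAlgebra k G :=
  MonoidAlgebra.mapDomainLinearMap k k (fun g : G => g⁻¹)

/-- Inclusion of `kH` into `kG`. -/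
noncomputable def incl14 {k : Type*} {G : Type*} [Field k] [Group G] (H : Subgroup G)
    (x : MonoidAlgebra k ↥H) : MonoidAlgebra k G :=
  MonoidAlgebra.ofCoeff (Finsupp.mapDomain ((↑) : ↥H → G) x.coeff)

/-- The induced-module condition for functions `G → kH`, where `H` acts on `kH` by left
multiplication. -/
def IndCond14 {k : Type*} {G : Type*} [Field k] [Group G] (H : Subgroup G)
    (f : G → MonoidAlgebra k ↥H) : Prop :=
  ∀ (h : H) (g : G), f (g * (h : G)) = MonoidAlgebra.of k ↥H h⁻¹ * f g

lemma mulApply14 {k G : Type*} [Field k] [Group G] [Fintype G]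
    (u v : MonoidAlgebra k G) (g : G) :
    (u * v).coeff g = ∑ h : G, u.coeff (g * h⁻¹) * v.coeff h := by
  classical
  rw [MonoidAlgebra.mul_apply]
  rw [Finsupp.sum_fintype _ _ (by intro i; simp [Finsupp.sum])]
  rw [Finset.sum_congr rfl fun i _ => Finsupp.sum_fintype _ _ (by intro j; simp)]
  rw [Finset.sum_comm]
  refine Finset.sum_congr rfl fun h _ => ?_
  have : ∀ a₁ : G, (a₁ * h = g) = (a₁ = g * h⁻¹) := by
    intro a₁
    simp [eq_mul_inv_iff_mul_eq]
  simp_rw [this]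
  simp

noncomputable def Phi14 {k G : Type*} [Field k] [Group G] (H : Subgroup G) [Fintype ↥H] :
    MonoidAlgebra k G →ₗ[k] (G → MonoidAlgebra k ↥H) where
  toFun x := fun g => MonoidAlgebra.ofCoeff (Finsupp.equivFunOnFinite.symm (fun h : ↥H => x.coeff (g * h)))
  map_add' x y := by ext g h; exact rfl
  map_smul' c x := by ext g h; exact rfl

@[simp] lemma Phi14_apply {k G : Type*} [Field k] [Group G] (H : Subgroup G) [Fintype ↥H]
    (x : MonoidAlgebra k G) (g : G) (h : ↥H) :
    (Phi14 H x g).coeff h = x.coeff (g * h) := rfl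

theorem stmt14 {k G : Type*} [Field k] [CharP k 2] [Group G] [Fintype G]
    (H : Subgroup G) [Fintype ↥H] [Fintype (G ⧸ H)]
    (a : MonoidAlgebra k ↥H) (haunit : IsUnit a) (hao : contra14 k ↥H a = a) :
    ∃ Φ : MonoidAlgebra k G →ₗ[k] (G → MonoidAlgebra k ↥H),
      -- lands in the induced module
      (∀ x : MonoidAlgebra k G, IndCond14 H (Φ x)) ∧
      -- bijectively
      Function.Injective Φ ∧
      (∀ f : G → MonoidAlgebra k ↥H, IndCond14 H f → ∃ x, Φ x = f) ∧
      -- kG-linearly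
      (∀ (g : G) (x : MonoidAlgebra k G),
        Φ (MonoidAlgebra.of k G g * x) = fun y : G => Φ x (g⁻¹ * y)) ∧
      -- isometrically from B_a on kG to the induced form B_a^G
      (∀ x y : MonoidAlgebra k G,
        (∑ c : G ⧸ H, ∑ h : ↥H, ((Φ x (Quotient.out c)) * a).coeff h * (Φ y (Quotient.out c)).coeff h) =
          ∑ g : G, (x * incl14 H a).coeff g * y.coeff g) := by
  classical
  refine ⟨Phi14 H, ?_, ?_, ?_, ?_, ?_⟩
  · -- IndCond
    intro x h g
    ext h'
    rw [MonoidAlgebra.of_apply, MonoidAlgebra.single_mul_apply]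
    simp [mul_assoc]
  · -- injective
    intro x y hxy
    ext g
    have h1 := congrFun hxy g
    have h2 := congrArg (fun u : MonoidAlgebra k ↥H => u.coeff (1 : ↥H)) h1
    simpa using h2
  · -- surjective onto induced module
    intro f hf
    refine ⟨MonoidAlgebra.ofCoeff (Finsupp.equivFunOnFinite.symm (fun g => (f g).coeff 1)), ?_⟩
    funext g
    ext h
    have : (Phi14 H (MonoidAlgebra.ofCoeff (Finsupp.equivFunOnFinite.symm (fun g => (f g).coeff 1))) g).coeff h = (f (g * h)).coeff 1 := rfl
    rw [this, hf h g, MonoidAlgebra.of_apply, MonoidAlgebra.single_mul_apply]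
    simp
  · -- kG-linearity
    intro g x
    funext y
    ext h
    simp [MonoidAlgebra.of_apply, MonoidAlgebra.single_mul_apply, mul_assoc]
  · -- isometry
    intro x y
    have hmem : ∀ g : G, (Quotient.out ((g : G ⧸ H)))⁻¹ * g ∈ H := by
      intro g
      rw [← QuotientGroup.eq]
      exact Quotient.out_eq _
    let e : (G ⧸ H) × ↥H ≃ G :=
      { toFun := fun p => Quotient.out p.1 * (p.2 : G)
        invFun := fun g => (QuotientGroup.mk g, ⟨(Quotient.out ((g : G ⧸ H)))⁻¹ * g, hmem g⟩)
        left_inv := by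
          rintro ⟨c, h⟩
          have hc : (QuotientGroup.mk (Quotient.out c * (h : G)) : G ⧸ H) = c := by
            rw [QuotientGroup.mk_mul_of_mem _ h.2]
            exact Quotient.out_eq c
          refine Prod.ext hc (Subtype.ext ?_)
          simp only [hc]
          group
        right_inv := by
          intro g
          simp }
    have LHS : (∑ c : G ⧸ H, ∑ h : ↥H,
        ((Phi14 H x (Quotient.out c)) * a).coeff h * (Phi14 H y (Quotient.out c)).coeff h) =
        ∑ g : G, (∑ h' : ↥H, x.coeff (g * (h' : G)⁻¹) * a.coeff h') * y.coeff g := by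
      rw [← Equiv.sum_comp e (fun g => (∑ h' : ↥H, x.coeff (g * (h' : G)⁻¹) * a.coeff h') * y.coeff g),
        Fintype.sum_prod_type]
      refine Finset.sum_congr rfl fun c _ => Finset.sum_congr rfl fun h _ => ?_
      rw [mulApply14]
      simp only [Phi14_apply]
      show (∑ h' : ↥H, x.coeff (Quotient.out c * ↑(h * h'⁻¹)) * a.coeff h') * y.coeff (Quotient.out c * ↑h) =
        (∑ h' : ↥H, x.coeff ((Quotient.out c * ↑h) * (↑h')⁻¹) * a.coeff h') * y.coeff (Quotient.out c * ↑h)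
      congr 1
      refine Finset.sum_congr rfl fun h' _ => ?_
      congr 2
      push_cast
      group
    rw [LHS]
    refine Finset.sum_congr rfl fun g _ => ?_
    congr 1
    rw [mulApply14]
    have key : ∀ F : G → k, (∀ g' : G, g' ∉ H → F g' = 0) →
        ∑ g' : G, F g' = ∑ h' : ↥H, F ↑h' := by
      intro F hF
      rw [← Finset.sum_subtype (Finset.univ.filter (· ∈ H)) (by simp) F]
      symm
      apply Finset.sum_subset (Finset.subset_univ _)
      intro g' _ hg'
      exact hF g' (by simpa using hg')
    have hvanish : ∀ g' : G, g' ∉ H → x.coeff (g * g'⁻¹) * (incl14 H a).coeff g' = 0 := by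
      intro g' hg'
      have : (incl14 H a).coeff g' = 0 := by
        apply Finsupp.mapDomain_notin_range
        rintro ⟨⟨h, hh⟩, rfl⟩
        exact hg' hh
      rw [this, mul_zero]
    rw [key _ hvanish]
    refine (Finset.sum_congr rfl fun h' _ => ?_).symm
    congr 1
    simp only [incl14]
    exact Finsupp.mapDomain_apply Subtype.val_injective a.coeff h'
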